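/- arXiv:1507.01622 — 2 statements merged into one kernel-verified Lean document; each statement's English description precedes it below -/
import Mathlib

section
/- Let α > −1, let q ≥ 0 be an integer, and let n ≥ 1 be an integer. Then P_{2n}^{α,q} has 2n distinct real zeros x_1 < x_2 < ⋯ < x_{2n} and P_{2n+1}^{α,q} has 2n+1 distinct real zeros y_1 < y_2 < ⋯ < y_{2n+1}, and these zeros do NOT interlace: it is not the case that y_k < x_k < y_{k+1} holds for every 1 ≤ k ≤ 2n. -/
open MeasureTheory intervalIntegral Polynomial

/-- Pochhammer symbol `(a)_k = a (a+1) ⋯ (a+k-1)`. -/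
noncomputable def poch (a : ℝ) (k : ℕ) : ℝ := ∏ i ∈ Finset.range k, (a + i)

/-- `Peven α q n x = P_{2n}^{α,q}(x)`, the monic generalized Gegenbauer-type polynomial
`Σ_{k=0}^{n} (−n)_k (−n−q−1/2)_k / (k! (−2n−α−q−1/2)_k) x^{2n−2k}`. -/
noncomputable def Peven (α : ℝ) (q n : ℕ) (x : ℝ) : ℝ :=
  ∑ k ∈ Finset.range (n + 1),
    poch (-(n : ℝ)) k * poch (-(n : ℝ) - q - 1/2) k /
      ((Nat.factorial k : ℝ) * poch (-(2 * (n : ℝ)) - α - q - 1/2) k) * x ^ (2*n - 2*k)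

/-- `Podd α q n x = P_{2n+1}^{α,q}(x) = (1+x) P_{2n}^{α+1,q}(x)`. -/
noncomputable def Podd (α : ℝ) (q n : ℕ) (x : ℝ) : ℝ := (1 + x) * Peven (α + 1) q n x

/-- `P α q n x = P_n^{α,q}(x)`. -/
noncomputable def P (α : ℝ) (q : ℕ) (n : ℕ) (x : ℝ) : ℝ :=
  if Even n then Peven α q (n / 2) x else Podd α q (n / 2) x

/-- falling factorial -/
noncomputable def dd (a : ℝ) (k : ℕ) : ℝ := ∏ i ∈ Finset.range k, (a - i)

lemma dd_zero (a : ℝ) : dd a 0 = 1 := by simp [dd]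

lemma dd_succ (a : ℝ) (k : ℕ) : dd a (k+1) = dd a k * (a - k) := by
  simp [dd, Finset.prod_range_succ]

lemma dd_add (a : ℝ) (k m : ℕ) : dd a (k + m) = dd a k * dd (a - k) m := by
  rw [dd, dd, dd, Finset.prod_range_add]
  congr 1
  refine Finset.prod_congr rfl fun i _ => ?_
  push_cast; ring

lemma poch_neg (a : ℝ) (k : ℕ) : poch (-a) k = (-1)^k * dd a k := by
  rw [poch, dd]
  have : ∀ i ∈ Finset.range k, (-a + (i:ℝ)) = (-1) * (a - i) := fun i _ => by ring
  rw [Finset.prod_congr rfl this, Finset.prod_mul_distrib, Finset.prod_const, Finset.card_range]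

lemma dd_nat (n k : ℕ) (hk : k ≤ n) : dd (n : ℝ) k = (n.descFactorial k : ℝ) := by
  induction k with
  | zero => simp [dd_zero]
  | succ k ih =>
    rw [dd_succ, ih (by omega), Nat.descFactorial_succ]
    have : ((n - k : ℕ) : ℝ) = (n : ℝ) - k := by
      push_cast [Nat.cast_sub (by omega : k ≤ n)]; ring
    push_cast [this]; ring

lemma choose_cast_eq_dd (n k : ℕ) (hk : k ≤ n) :
    (n.choose k : ℝ) * (Nat.factorial k : ℝ) = dd (n : ℝ) k := by
  rw [dd_nat n k hk, Nat.descFactorial_eq_factorial_mul_choose]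
  push_cast; ring

/-- the Pascal regrouping lemma -/
lemma pascal_sum (T : ℕ → ℕ → ℝ) (j : ℕ) :
    ∑ i ∈ Finset.range (j+1), (j.choose i : ℝ) * (T (i+1) (j-i) + T i (j-i+1))
      = ∑ i ∈ Finset.range (j+2), ((j+1).choose i : ℝ) * T i (j+1-i) := by
  have h1 : ∑ i ∈ Finset.range (j+2), (j.choose i : ℝ) * T i (j+1-i)
      = ∑ i ∈ Finset.range (j+1), (j.choose i : ℝ) * T i (j-i+1) := by
    rw [Finset.sum_range_succ, Nat.choose_succ_self]
    simp only [Nat.cast_zero, zero_mul, add_zero]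
    refine Finset.sum_congr rfl fun i hi => ?_
    have hi' : i ≤ j := by simpa [Nat.lt_succ_iff] using hi
    congr 2
    omega
  have h2 : ∑ i ∈ Finset.range (j+2),
          (if i = 0 then 0 else ((j.choose (i-1) : ℝ)) * T i (j+1-i))
      = ∑ i ∈ Finset.range (j+1), (j.choose i : ℝ) * T (i+1) (j-i) := by
    rw [Finset.sum_range_succ' (f := fun i => if i = 0 then (0:ℝ) else ((j.choose (i-1) : ℝ)) * T i (j+1-i)) (n := j+1)]
    simp only [Nat.succ_ne_zero, if_false, if_true, ite_true, ite_false, reduceIte, Nat.add_sub_cancel, add_zero]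
    refine Finset.sum_congr rfl fun i hi => ?_
    have hi' : i ≤ j := by simpa [Nat.lt_succ_iff] using hi
    congr 2
    omega
  calc ∑ i ∈ Finset.range (j+1), (j.choose i : ℝ) * (T (i+1) (j-i) + T i (j-i+1))
      = (∑ i ∈ Finset.range (j+1), (j.choose i : ℝ) * T (i+1) (j-i))
        + ∑ i ∈ Finset.range (j+1), (j.choose i : ℝ) * T i (j-i+1) := by
        rw [← Finset.sum_add_distrib]; refine Finset.sum_congr rfl fun i _ => by ring
    _ = ∑ i ∈ Finset.range (j+2),
          ((if i = 0 then 0 else ((j.choose (i-1) : ℝ)) * T i (j+1-i))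
            + (j.choose i : ℝ) * T i (j+1-i)) := by
        rw [← h1, ← h2, ← Finset.sum_add_distrib]
    _ = ∑ i ∈ Finset.range (j+2), ((j+1).choose i : ℝ) * T i (j+1-i) := by
        refine Finset.sum_congr rfl fun i _ => ?_
        rcases Nat.eq_zero_or_pos i with h | h
        · subst h; simp
        · obtain ⟨i', rfl⟩ := Nat.exists_eq_succ_of_ne_zero h.ne'
          rw [if_neg (by omega)]
          have : (j+1).choose (i'+1) = j.choose i' + j.choose (i'+1) := Nat.choose_succ_succ j i'
          rw [this]
          push_cast
          ring

/-- Vandermonde for falling factorials -/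
lemma dd_vandermonde (x y : ℝ) : ∀ N : ℕ, dd (x + y) N
    = ∑ m ∈ Finset.range (N+1), (N.choose m : ℝ) * (dd x m * dd y (N-m)) := by
  intro N
  induction N with
  | zero => simp [dd_zero]
  | succ N ih =>
    rw [dd_succ, ih, Finset.sum_mul]
    have : ∀ m ∈ Finset.range (N+1),
        (N.choose m : ℝ) * (dd x m * dd y (N-m)) * (x + y - N)
        = (N.choose m : ℝ) * ((dd x (m+1) * dd y (N-m)) + dd x m * dd y ((N-m)+1)) := by
      intro m hm
      have hm' : m ≤ N := by simpa [Nat.lt_succ_iff] using hm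
      rw [dd_succ, dd_succ]
      have : ((N - m : ℕ) : ℝ) = (N : ℝ) - m := by
        push_cast [Nat.cast_sub hm']; ring
      rw [this]
      ring
    rw [Finset.sum_congr rfl this]
    exact pascal_sum (fun i m => dd x i * dd y m) N

lemma choose_mul_choose (n j k : ℕ) (hk : k ≤ j) (hj : j ≤ n) :
    n.choose j * j.choose k = n.choose k * (n-k).choose (j-k) := by
  have hfac : 0 < Nat.factorial k * (Nat.factorial (j-k) * Nat.factorial (n-j)) :=
    Nat.mul_pos (Nat.factorial_pos _) (Nat.mul_pos (Nat.factorial_pos _) (Nat.factorial_pos _))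
  apply Nat.eq_of_mul_eq_mul_right hfac
  have e1 : n.choose j * j.choose k * (Nat.factorial k * (Nat.factorial (j-k) * Nat.factorial (n-j)))
      = n.choose j * (j.choose k * Nat.factorial k * Nat.factorial (j-k)) * Nat.factorial (n-j) := by ring
  have e2 : n.choose k * (n-k).choose (j-k) * (Nat.factorial k * (Nat.factorial (j-k) * Nat.factorial (n-j)))
      = n.choose k * Nat.factorial k * ((n-k).choose (j-k) * Nat.factorial (j-k) * Nat.factorial (n-k-(j-k))) := by
    have : n - k - (j - k) = n - j := by omega
    rw [this]; ring
  rw [e1, e2, Nat.choose_mul_factorial_mul_factorial hk,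
    Nat.choose_mul_factorial_mul_factorial hj,
    Nat.choose_mul_factorial_mul_factorial (by omega : j - k ≤ n - k)]
  have e3 : n - k - (j - k) = n - j := by omega
  have := Nat.choose_mul_factorial_mul_factorial (by omega : k ≤ n)
  calc Nat.factorial n = n.choose k * Nat.factorial k * Nat.factorial (n-k) := this.symm
    _ = _ := by ring

lemma dd_pos_of (A : ℝ) (k : ℕ) (h : ∀ i : ℕ, i < k → 0 < A - i) : 0 < dd A k :=
  Finset.prod_pos fun i hi => h i (Finset.mem_range.1 hi)

noncomputable def pc (A B : ℝ) (n k : ℕ) : ℝ :=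
  poch (-(n:ℝ)) k * poch (-A) k / ((Nat.factorial k : ℝ) * poch (-(A+B)) k)

lemma coeff_id (A B : ℝ) (n k : ℕ) (hk : k ≤ n) :
    ∑ m ∈ Finset.range (n-k+1),
      ((n.choose (k+m) : ℝ) * ((k+m).choose k : ℝ)) * (dd A (k+m) * dd B (n-k-m))
      = (n.choose k : ℝ) * dd A k * dd (A+B-k) (n-k) := by
  have step : ∀ m ∈ Finset.range (n-k+1),
      ((n.choose (k+m) : ℝ) * ((k+m).choose k : ℝ)) * (dd A (k+m) * dd B (n-k-m))
      = (n.choose k : ℝ) * dd A k * (((n-k).choose m : ℝ) * (dd (A-k) m * dd B (n-k-m))) := by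
    intro m hm
    have hm' : m ≤ n - k := by simpa [Nat.lt_succ_iff] using hm
    have hc : n.choose (k+m) * (k+m).choose k = n.choose k * (n-k).choose m := by
      have := choose_mul_choose n (k+m) k (by omega) (by omega)
      simpa [Nat.add_sub_cancel_left] using this
    have : ((n.choose (k+m) : ℝ) * ((k+m).choose k : ℝ)) = (n.choose k : ℝ) * ((n-k).choose m : ℝ) := by
      exact_mod_cast congrArg (fun x : ℕ => (x : ℝ)) hc
    rw [this, dd_add A k m]
    ring
  rw [Finset.sum_congr rfl step, ← Finset.mul_sum]
  have : A + B - k = (A - k) + B := by ring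
  rw [this, dd_vandermonde (A - k) B (n-k)]

lemma key_identity (A B : ℝ) (n : ℕ) (hAB : ∀ i : ℕ, i < n → 0 < A + B - i) (u : ℝ) :
    ∑ j ∈ Finset.range (n+1),
      (n.choose j : ℝ) * dd A j * dd B (n-j) * (-1:ℝ)^(n-j) * u^(n-j) * (1-u)^j
    = (-1:ℝ)^n * dd (A+B) n * ∑ k ∈ Finset.range (n+1), pc A B n k * u^(n-k) := by
  have hbin : ∀ j : ℕ, (1-u)^j = ∑ i ∈ Finset.range (j+1), (-u)^i * (j.choose i : ℝ) := by
    intro j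
    rw [show (1-u) = -u + 1 by ring, add_pow]
    simp
  have s1 : ∑ j ∈ Finset.range (n+1),
      (n.choose j : ℝ) * dd A j * dd B (n-j) * (-1:ℝ)^(n-j) * u^(n-j) * (1-u)^j
      = ∑ j ∈ Finset.range (n+1), ∑ i ∈ Finset.range (j+1),
        (n.choose j : ℝ) * dd A j * dd B (n-j) * (-1:ℝ)^(n-j) * u^(n-j) * ((-u)^(j-i) * (j.choose (j-i) : ℝ)) := by
    refine Finset.sum_congr rfl fun j _ => ?_
    rw [hbin j, Finset.mul_sum, ← Finset.sum_range_reflect]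
    simp only [Nat.add_sub_cancel]
  have s2 : ∑ j ∈ Finset.range (n+1), ∑ i ∈ Finset.range (j+1),
        (n.choose j : ℝ) * dd A j * dd B (n-j) * (-1:ℝ)^(n-j) * u^(n-j) * ((-u)^(j-i) * (j.choose (j-i) : ℝ))
      = ∑ i ∈ Finset.range (n+1), ∑ j ∈ Finset.Ico i (n+1),
        (n.choose j : ℝ) * dd A j * dd B (n-j) * (-1:ℝ)^(n-j) * u^(n-j) * ((-u)^(j-i) * (j.choose (j-i) : ℝ)) := by
    refine Finset.sum_comm' ?_
    intro j i
    simp only [Finset.mem_range, Finset.mem_Ico]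
    omega
  have s3 : ∀ i ∈ Finset.range (n+1), ∑ j ∈ Finset.Ico i (n+1),
        (n.choose j : ℝ) * dd A j * dd B (n-j) * (-1:ℝ)^(n-j) * u^(n-j) * ((-u)^(j-i) * (j.choose (j-i) : ℝ))
      = (-1:ℝ)^(n-i) * u^(n-i) * ((n.choose i : ℝ) * dd A i * dd (A+B-i) (n-i)) := by
    intro i hi
    have hi' : i ≤ n := by simpa [Nat.lt_succ_iff] using hi
    rw [Finset.sum_Ico_eq_sum_range]
    have e : n + 1 - i = n - i + 1 := by omega
    rw [e]
    have step : ∀ m ∈ Finset.range (n-i+1),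
        (n.choose (i+m) : ℝ) * dd A (i+m) * dd B (n-(i+m)) * (-1:ℝ)^(n-(i+m)) * u^(n-(i+m))
          * ((-u)^((i+m)-i) * ((i+m).choose ((i+m)-i) : ℝ))
        = (-1:ℝ)^(n-i) * u^(n-i) *
          (((n.choose (i+m) : ℝ) * ((i+m).choose i : ℝ)) * (dd A (i+m) * dd B (n-i-m))) := by
      intro m hm
      have hm' : m ≤ n - i := by simpa [Nat.lt_succ_iff] using hm
      have e1 : (i+m) - i = m := by omega
      have e2 : n - (i+m) = n - i - m := by omega
      have e3 : (i+m).choose m = (i+m).choose i := by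
        rw [← Nat.choose_symm (by omega : m ≤ i + m)]
        congr 1
        omega
      rw [e1, e2, e3, show ((-u):ℝ)^m = (-1:ℝ)^m * u^m from by rw [neg_pow]]
      have e5 : (-1:ℝ)^(n-i-m) * (-1:ℝ)^m = (-1:ℝ)^(n-i) := by
        rw [← pow_add]; congr 1; omega
      have e6 : u^(n-i-m) * u^m = u^(n-i) := by
        rw [← pow_add]; congr 1; omega
      calc (n.choose (i+m) : ℝ) * dd A (i+m) * dd B (n-i-m) * (-1:ℝ)^(n-i-m) * u^(n-i-m)
            * (((-1:ℝ)^m * u^m) * ((i+m).choose i : ℝ))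
          = ((-1:ℝ)^(n-i-m) * (-1:ℝ)^m) * (u^(n-i-m) * u^m) *
            (((n.choose (i+m) : ℝ) * ((i+m).choose i : ℝ)) * (dd A (i+m) * dd B (n-i-m))) := by
            ring
        _ = _ := by rw [e5, e6]
    rw [Finset.sum_congr rfl step, ← Finset.mul_sum, coeff_id A B n i hi']
  have s4 : ∀ k ∈ Finset.range (n+1),
      (-1:ℝ)^(n-k) * u^(n-k) * ((n.choose k : ℝ) * dd A k * dd (A+B-k) (n-k))
      = (-1:ℝ)^n * dd (A+B) n * (pc A B n k * u^(n-k)) := by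
    intro k hk
    have hk' : k ≤ n := by simpa [Nat.lt_succ_iff] using hk
    have hddpos : 0 < dd (A+B) k := dd_pos_of _ _ fun i hi => hAB i (by omega)
    have hfac : (Nat.factorial k : ℝ) ≠ 0 := Nat.cast_ne_zero.2 (Nat.factorial_ne_zero k)
    have hsplit : dd (A+B) n = dd (A+B) k * dd (A+B-k) (n-k) := by
      rw [← dd_add]
      congr 1
      omega
    have hch : (n.choose k : ℝ) = dd (n:ℝ) k / (Nat.factorial k : ℝ) := by
      rw [← choose_cast_eq_dd n k hk']
      field_simp
    have hpc : pc A B n k = (-1:ℝ)^k * dd (n:ℝ) k * dd A k / ((Nat.factorial k : ℝ) * dd (A+B) k) := by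
      rw [pc, poch_neg, poch_neg, poch_neg]
      rw [div_eq_div_iff (by positivity) ?h2]
      · ring
      case h2 =>
        refine mul_ne_zero hfac (ne_of_gt hddpos)
    have hsgn : (-1:ℝ)^(n-k) * (-1:ℝ)^k = (-1:ℝ)^n := by
      rw [← pow_add]; congr 1; omega
    rw [hpc, hsplit, hch]
    field_simp
    rw [← hsgn]
    ring_nf
    rw [show ((-1:ℝ))^(k*2) = 1 by rw [mul_comm, pow_mul]; norm_num, mul_one]
  rw [s1, s2, Finset.sum_congr rfl s3, Finset.sum_congr rfl s4, ← Finset.mul_sum]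

open Set Filter Topology

noncomputable def Sf (A B : ℝ) (i m : ℕ) (u : ℝ) : ℝ :=
  dd A i * dd B m * (-1:ℝ)^m * u ^ (A - i) * (1-u) ^ (B - m)

noncomputable def hf (A B : ℝ) (u : ℝ) : ℝ := u ^ A * (1-u) ^ B

noncomputable def Ff (A B : ℝ) (j : ℕ) (u : ℝ) : ℝ :=
  ∑ i ∈ Finset.range (j+1), (j.choose i : ℝ) * Sf A B i (j-i) u

lemma Sf_hasDeriv (A B : ℝ) (i m : ℕ) (u : ℝ) (hu : u ∈ Ioo (0:ℝ) 1) :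
    HasDerivAt (Sf A B i m) (Sf A B (i+1) m u + Sf A B i (m+1) u) u := by
  obtain ⟨hu0, hu1⟩ := hu
  have h1 : HasDerivAt (fun x : ℝ => x ^ (A - i)) ((A - i) * u ^ (A - i - 1)) u :=
    Real.hasDerivAt_rpow_const (Or.inl hu0.ne')
  have hsub : HasDerivAt (fun x : ℝ => 1 - x) (-1) u := by
    simpa using (hasDerivAt_id u).const_sub 1
  have h2 : HasDerivAt (fun x : ℝ => (1 - x) ^ (B - m)) (-1 * ((B - m) * (1-u) ^ (B - m - 1))) u := by
    have := hsub.rpow_const (p := B - m) (Or.inl (by linarith : (1:ℝ) - u ≠ 0))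
    convert this using 1
    ring
  have h3 := (h1.mul h2).const_mul (dd A i * dd B m * (-1:ℝ)^m)
  have key : Sf A B (i+1) m u + Sf A B i (m+1) u
      = (dd A i * dd B m * (-1:ℝ)^m) *
        ((A - i) * u ^ (A - i - 1) * (1-u) ^ (B - m)
          + u ^ (A - i) * (-1 * ((B - m) * (1-u) ^ (B - m - 1)))) := by
    simp only [Sf]
    rw [dd_succ A i, dd_succ B m, pow_succ,
      show (A - ((i+1:ℕ):ℝ)) = A - i - 1 by push_cast; ring,
      show (B - ((m+1:ℕ):ℝ)) = B - m - 1 by push_cast; ring]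
    ring
  have hfun : Sf A B i m = fun x : ℝ =>
      (dd A i * dd B m * (-1:ℝ)^m) * (x ^ (A - i) * (1-x) ^ (B - m)) := by
    ext x; simp only [Sf]; ring
  rw [hfun, key]
  exact h3

lemma Ff_hasDeriv (A B : ℝ) (j : ℕ) (u : ℝ) (hu : u ∈ Ioo (0:ℝ) 1) :
    HasDerivAt (Ff A B j) (Ff A B (j+1) u) u := by
  have der : HasDerivAt (fun v => ∑ i ∈ Finset.range (j+1), (j.choose i : ℝ) * Sf A B i (j-i) v)
      (∑ i ∈ Finset.range (j+1), (j.choose i : ℝ) * (Sf A B (i+1) (j-i) u + Sf A B i ((j-i)+1) u)) u := by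
    refine HasDerivAt.fun_sum fun i _ => ?_
    exact (Sf_hasDeriv A B i (j-i) u hu).const_mul _
  have : Ff A B (j+1) u
      = ∑ i ∈ Finset.range (j+1), (j.choose i : ℝ) * (Sf A B (i+1) (j-i) u + Sf A B i ((j-i)+1) u) :=
    (pascal_sum (fun i m => Sf A B i m u) j).symm
  rw [Ff] at *
  rw [this]
  exact der

lemma iter_eq (A B : ℝ) (j : ℕ) : Set.EqOn (iteratedDeriv j (hf A B)) (Ff A B j) (Ioo (0:ℝ) 1) := by
  induction j with
  | zero =>
    intro u _
    simp [iteratedDeriv_zero, Ff, Sf, hf, dd_zero]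
  | succ j ih =>
    intro u hu
    rw [iteratedDeriv_succ]
    have hev : iteratedDeriv j (hf A B) =ᶠ[𝓝 u] Ff A B j :=
      Filter.eventuallyEq_of_mem (isOpen_Ioo.mem_nhds hu) ih
    have hd : HasDerivAt (iteratedDeriv j (hf A B)) (Ff A B (j+1) u) u :=
      (Ff_hasDeriv A B j u hu).congr_of_eventuallyEq hev
    exact hd.deriv

lemma iter_hasDeriv (A B : ℝ) (j : ℕ) (u : ℝ) (hu : u ∈ Ioo (0:ℝ) 1) :
    HasDerivAt (iteratedDeriv j (hf A B)) (iteratedDeriv (j+1) (hf A B) u) u := by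
  have hev : iteratedDeriv j (hf A B) =ᶠ[𝓝 u] Ff A B j :=
    Filter.eventuallyEq_of_mem (isOpen_Ioo.mem_nhds hu) (iter_eq A B j)
  rw [iter_eq A B (j+1) hu]
  exact (Ff_hasDeriv A B j u hu).congr_of_eventuallyEq hev

lemma Sf_tend0 (A B : ℝ) (i m : ℕ) (hi : 0 < A - i) :
    Tendsto (Sf A B i m) (𝓝[>] (0:ℝ)) (𝓝 0) := by
  have l1 : Tendsto (fun u : ℝ => u ^ (A - i)) (𝓝[>] (0:ℝ)) (𝓝 0) := by
    have := (Real.continuousAt_rpow_const 0 (A - i) (Or.inr hi.le)).tendsto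
    rw [Real.zero_rpow hi.ne'] at this
    exact this.mono_left nhdsWithin_le_nhds
  have l2 : Tendsto (fun u : ℝ => (1-u) ^ (B - m)) (𝓝[>] (0:ℝ)) (𝓝 1) := by
    have c1 : ContinuousAt (fun u : ℝ => (1-u) ^ (B - m)) 0 := by
      refine ContinuousAt.rpow_const ?_ (Or.inl ?_)
      · exact (continuous_const.sub continuous_id).continuousAt
      · norm_num
    have := c1.tendsto
    simp only [sub_zero, Real.one_rpow] at this
    exact this.mono_left nhdsWithin_le_nhds
  have := ((tendsto_const_nhds (x := dd A i * dd B m * (-1:ℝ)^m)).mul l1).mul l2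
  simp only [mul_zero, zero_mul] at this
  exact this

lemma Sf_tend1 (A B : ℝ) (i m : ℕ) (hm : 0 < B - m) :
    Tendsto (Sf A B i m) (𝓝[<] (1:ℝ)) (𝓝 0) := by
  have l1 : Tendsto (fun u : ℝ => u ^ (A - i)) (𝓝[<] (1:ℝ)) (𝓝 1) := by
    have := (Real.continuousAt_rpow_const 1 (A - i) (Or.inl one_ne_zero)).tendsto
    rw [Real.one_rpow] at this
    exact this.mono_left nhdsWithin_le_nhds
  have l2 : Tendsto (fun u : ℝ => (1-u) ^ (B - m)) (𝓝[<] (1:ℝ)) (𝓝 0) := by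
    have c1 : ContinuousAt (fun u : ℝ => (1-u) ^ (B - m)) 1 := by
      refine ContinuousAt.rpow_const ?_ (Or.inr hm.le)
      exact (continuous_const.sub continuous_id).continuousAt
    have := c1.tendsto
    simp only [sub_self, Real.zero_rpow hm.ne'] at this
    exact this.mono_left nhdsWithin_le_nhds
  have := ((tendsto_const_nhds (x := dd A i * dd B m * (-1:ℝ)^m)).mul l1).mul l2
  simp only [mul_zero, zero_mul] at this
  exact this

lemma iter_tend0 (A B : ℝ) (n j : ℕ) (hj : j < n) (hA : ∀ i : ℕ, i ≤ n → 0 < A - i) :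
    Tendsto (iteratedDeriv j (hf A B)) (𝓝[>] (0:ℝ)) (𝓝 0) := by
  have hF : Tendsto (Ff A B j) (𝓝[>] (0:ℝ)) (𝓝 0) := by
    have : Tendsto (fun u => ∑ i ∈ Finset.range (j+1), (j.choose i : ℝ) * Sf A B i (j-i) u)
        (𝓝[>] (0:ℝ)) (𝓝 (∑ i ∈ Finset.range (j+1), (0:ℝ))) := by
      refine tendsto_finset_sum _ fun i hi => ?_
      have hi' : i ≤ j := by simpa [Nat.lt_succ_iff] using hi
      have := (Sf_tend0 A B i (j-i) (hA i (by omega))).const_mul ((j.choose i : ℝ))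
      simpa using this
    rw [Finset.sum_const_zero] at this
    exact this
  refine hF.congr' ?_
  filter_upwards [Ioo_mem_nhdsGT one_pos] with u hu
  exact (iter_eq A B j hu).symm

lemma iter_tend1 (A B : ℝ) (n j : ℕ) (hj : j < n) (hB : ∀ i : ℕ, i < n → 0 < B - i) :
    Tendsto (iteratedDeriv j (hf A B)) (𝓝[<] (1:ℝ)) (𝓝 0) := by
  have hF : Tendsto (Ff A B j) (𝓝[<] (1:ℝ)) (𝓝 0) := by
    have : Tendsto (fun u => ∑ i ∈ Finset.range (j+1), (j.choose i : ℝ) * Sf A B i (j-i) u)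
        (𝓝[<] (1:ℝ)) (𝓝 (∑ i ∈ Finset.range (j+1), (0:ℝ))) := by
      refine tendsto_finset_sum _ fun i hi => ?_
      have hi' : i ≤ j := by simpa [Nat.lt_succ_iff] using hi
      have := (Sf_tend1 A B i (j-i) (hB (j-i) (by omega))).const_mul ((j.choose i : ℝ))
      simpa using this
    rw [Finset.sum_const_zero] at this
    exact this
  refine hF.congr' ?_
  filter_upwards [Ioo_mem_nhdsLT one_pos] with u hu
  exact (iter_eq A B j hu).symm

lemma rolle_step {f f' : ℝ → ℝ}
    (hf0 : Tendsto f (𝓝[>] (0:ℝ)) (𝓝 0)) (hf1 : Tendsto f (𝓝[<] (1:ℝ)) (𝓝 0))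
    (hd : ∀ x ∈ Ioo (0:ℝ) 1, HasDerivAt f (f' x) x)
    {j : ℕ} (t : Fin j → ℝ) (ht : StrictMono t)
    (htm : ∀ i, t i ∈ Ioo (0:ℝ) 1) (htz : ∀ i, f (t i) = 0) :
    ∃ t' : Fin (j+1) → ℝ, StrictMono t' ∧ (∀ i, t' i ∈ Ioo (0:ℝ) 1) ∧ ∀ i, f' (t' i) = 0 := by
  set L : Fin (j+1) → ℝ := fun i => if h : (i:ℕ) = 0 then 0 else t ⟨(i:ℕ)-1, by have := i.isLt; omega⟩ with hL
  set R : Fin (j+1) → ℝ := fun i => if h : (i:ℕ) = j then 1 else t ⟨(i:ℕ), by have := i.isLt; omega⟩ with hR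
  have hL0 : ∀ i, 0 ≤ L i := by
    intro i
    simp only [hL]
    split
    · exact le_refl 0
    · exact (htm _).1.le
  have hL1 : ∀ i, L i < 1 := by
    intro i
    simp only [hL]
    split
    · norm_num
    · exact (htm _).2
  have hR1 : ∀ i, R i ≤ 1 := by
    intro i
    simp only [hR]
    split
    · exact le_refl 1
    · exact (htm _).2.le
  have hLR : ∀ i, L i < R i := by
    intro i
    simp only [hL, hR]
    rcases Nat.eq_zero_or_pos (i:ℕ) with h0 | h0
    · rw [dif_pos h0]
      split
      · norm_num
      · exact (htm _).1
    · rw [dif_neg (by omega)]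
      split
      · exact (htm _).2
      · refine ht ?_
        simp only [Fin.mk_lt_mk]
        omega
  have htendL : ∀ i, Tendsto f (𝓝[>] (L i)) (𝓝 0) := by
    intro i
    simp only [hL]
    split
    · exact hf0
    · next h =>
      have hk : (i:ℕ)-1 < j := by have := i.isLt; omega
      have hc : ContinuousAt f (t ⟨(i:ℕ)-1, hk⟩) := (hd _ (htm ⟨(i:ℕ)-1, hk⟩)).continuousAt
      have h2 : Tendsto f (𝓝[>] (t ⟨(i:ℕ)-1, hk⟩)) (𝓝 (f (t ⟨(i:ℕ)-1, hk⟩))) :=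
        hc.tendsto.mono_left nhdsWithin_le_nhds
      rwa [htz ⟨(i:ℕ)-1, hk⟩] at h2
  have htendR : ∀ i, Tendsto f (𝓝[<] (R i)) (𝓝 0) := by
    intro i
    simp only [hR]
    split
    · exact hf1
    · next h =>
      have hk : (i:ℕ) < j := by have := i.isLt; omega
      have hc : ContinuousAt f (t ⟨(i:ℕ), hk⟩) := (hd _ (htm ⟨(i:ℕ), hk⟩)).continuousAt
      have h2 : Tendsto f (𝓝[<] (t ⟨(i:ℕ), hk⟩)) (𝓝 (f (t ⟨(i:ℕ), hk⟩))) :=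
        hc.tendsto.mono_left nhdsWithin_le_nhds
      rwa [htz ⟨(i:ℕ), hk⟩] at h2
  have hsub : ∀ i, Ioo (L i) (R i) ⊆ Ioo (0:ℝ) 1 := by
    intro i x hx
    exact ⟨lt_of_le_of_lt (hL0 i) hx.1, lt_of_lt_of_le hx.2 (hR1 i)⟩
  have hex : ∀ i : Fin (j+1), ∃ c ∈ Ioo (L i) (R i), f' c = 0 := by
    intro i
    exact exists_hasDerivAt_eq_zero' (hLR i) (htendL i) (htendR i)
      (fun x hx => hd x (hsub i hx))
  choose c hc1 hc2 using hex
  have hconsec : ∀ i : Fin j, R i.castSucc = t i ∧ L i.succ = t i := by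
    intro i
    constructor
    · simp only [hR, Fin.coe_castSucc]
      rw [dif_neg (by have := i.isLt; omega)]
    · simp only [hL, Fin.val_succ]
      rw [dif_neg (by omega)]
      congr 1
  refine ⟨c, ?_, fun i => hsub i (hc1 i), hc2⟩
  rw [Fin.strictMono_iff_lt_succ]
  intro i
  have h1 : c i.castSucc < R i.castSucc := (hc1 _).2
  have h2 : L i.succ < c i.succ := (hc1 _).1
  rw [(hconsec i).1] at h1
  rw [(hconsec i).2] at h2
  linarith

lemma iter_zeros (A B : ℝ) (n : ℕ)
    (hA : ∀ i : ℕ, i ≤ n → 0 < A - i) (hB : ∀ i : ℕ, i < n → 0 < B - i) :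
    ∀ j, j ≤ n → ∃ t : Fin j → ℝ, StrictMono t ∧ (∀ i, t i ∈ Ioo (0:ℝ) 1) ∧
      ∀ i, iteratedDeriv j (hf A B) (t i) = 0 := by
  intro j
  induction j with
  | zero =>
    intro _
    exact ⟨Fin.elim0, fun a => a.elim0, fun a => a.elim0, fun a => a.elim0⟩
  | succ j ih =>
    intro hj
    obtain ⟨t, ht, htm, htz⟩ := ih (by omega)
    exact rolle_step (iter_tend0 A B n j (by omega) hA) (iter_tend1 A B n j (by omega) hB)
      (fun x hx => iter_hasDeriv A B j x hx) t ht htm htz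

lemma pc_zero (A B : ℝ) (n : ℕ) : pc A B n 0 = 1 := by
  simp [pc, poch]

lemma poly_count (A B : ℝ) (n : ℕ) (t : Fin n → ℝ) (ht : StrictMono t)
    (htz : ∀ i, ∑ k ∈ Finset.range (n+1), pc A B n k * (t i)^(n-k) = 0) :
    ∀ u : ℝ, (∑ k ∈ Finset.range (n+1), pc A B n k * u^(n-k) = 0) ↔ ∃ i, t i = u := by
  classical
  set p : Polynomial ℝ := ∑ k ∈ Finset.range (n+1), Polynomial.C (pc A B n k) * Polynomial.X^(n-k) with hp
  have heval : ∀ u : ℝ, p.eval u = ∑ k ∈ Finset.range (n+1), pc A B n k * u^(n-k) := by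
    intro u
    simp [hp, Polynomial.eval_finset_sum]
  have hcoeff : p.coeff n = 1 := by
    rw [hp, Polynomial.finset_sum_coeff]
    have : ∀ k ∈ Finset.range (n+1),
        (Polynomial.C (pc A B n k) * Polynomial.X^(n-k)).coeff n
          = if k = 0 then pc A B n k else 0 := by
      intro k hk
      have hk' : k ≤ n := by simpa [Nat.lt_succ_iff] using hk
      rw [Polynomial.coeff_C_mul, Polynomial.coeff_X_pow]
      rcases Nat.eq_zero_or_pos k with h0 | h0
      · subst h0; simp
      · rw [if_neg (by omega), if_neg (by omega)]
        ring
    rw [Finset.sum_congr rfl this, Finset.sum_ite_eq' (Finset.range (n+1)) 0]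
    simp [pc_zero]
  have hpne : p ≠ 0 := by
    intro h
    rw [h] at hcoeff
    simp at hcoeff
  have hdeg : p.natDegree ≤ n := by
    rw [hp]
    refine Polynomial.natDegree_sum_le_of_forall_le _ _ fun k hk => ?_
    refine (Polynomial.natDegree_C_mul_le _ _).trans ?_
    rw [Polynomial.natDegree_X_pow]
    omega
  intro u
  constructor
  · intro hu
    by_contra hne
    push_neg at hne
    have hroots : ∀ i, t i ∈ p.roots.toFinset := by
      intro i
      rw [Multiset.mem_toFinset, Polynomial.mem_roots hpne]
      rw [Polynomial.IsRoot, heval]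
      exact htz i
    have huroot : u ∈ p.roots.toFinset := by
      rw [Multiset.mem_toFinset, Polynomial.mem_roots hpne, Polynomial.IsRoot, heval]
      exact hu
    have hsubset : insert u (Finset.image t Finset.univ) ⊆ p.roots.toFinset := by
      intro x hx
      rcases Finset.mem_insert.1 hx with h | h
      · subst h; exact huroot
      · obtain ⟨i, _, rfl⟩ := Finset.mem_image.1 h
        exact hroots i
    have hcard : n + 1 ≤ p.roots.toFinset.card := by
      have h1 : (insert u (Finset.image t Finset.univ)).card = n + 1 := by
        rw [Finset.card_insert_of_notMem]
        · rw [Finset.card_image_of_injective _ ht.injective, Finset.card_univ, Fintype.card_fin]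
        · intro hmem
          obtain ⟨i, _, hi⟩ := Finset.mem_image.1 hmem
          exact (hne i) hi
      rw [← h1]
      exact Finset.card_le_card hsubset
    have : p.roots.toFinset.card ≤ n :=
      le_trans (Multiset.toFinset_card_le _) (le_trans (Polynomial.card_roots' p) hdeg)
    omega
  · rintro ⟨i, rfl⟩
    exact htz i

lemma main_zeros (A B : ℝ) (n : ℕ)
    (hA : ∀ i : ℕ, i ≤ n → 0 < A - i) (hB : ∀ i : ℕ, i < n → 0 < B - i) :
    ∃ t : Fin n → ℝ, StrictMono t ∧ (∀ i, t i ∈ Ioo (0:ℝ) 1) ∧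
      ∀ u : ℝ, (∑ k ∈ Finset.range (n+1), pc A B n k * u^(n-k) = 0) ↔ ∃ i, t i = u := by
  have hAB : ∀ i : ℕ, i < n → 0 < A + B - i := by
    intro i hi
    have h1 := hA i (le_of_lt hi)
    have h2 : 0 < B := by
      have := hB (n-1) (by omega)
      have hc : (0:ℝ) ≤ ((n-1 : ℕ) : ℝ) := Nat.cast_nonneg _
      linarith
    linarith
  obtain ⟨t, ht, htm, htz⟩ := iter_zeros A B n hA hB n (le_refl n)
  -- factorization of Ff at interior points
  have hfac : ∀ u ∈ Ioo (0:ℝ) 1, Ff A B n u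
      = u^(A - n) * (1-u)^(B - n) *
        ((-1:ℝ)^n * dd (A+B) n * ∑ k ∈ Finset.range (n+1), pc A B n k * u^(n-k)) := by
    intro u hu
    obtain ⟨hu0, hu1⟩ := hu
    have hstep : ∀ i ∈ Finset.range (n+1), (n.choose i : ℝ) * Sf A B i (n-i) u
        = u^(A - n) * (1-u)^(B - n) *
          ((n.choose i : ℝ) * dd A i * dd B (n-i) * (-1:ℝ)^(n-i) * u^(n-i) * (1-u)^i) := by
      intro i hi
      have hi' : i ≤ n := by simpa [Nat.lt_succ_iff] using hi
      have e1 : (A - (i:ℝ)) = (A - n) + ((n-i : ℕ) : ℝ) := by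
        rw [Nat.cast_sub hi']; ring
      have e2 : (B - ((n-i : ℕ):ℝ)) = (B - n) + ((i : ℕ) : ℝ) := by
        rw [Nat.cast_sub hi']; ring
      rw [Sf, e1, e2, Real.rpow_add hu0, Real.rpow_natCast,
        Real.rpow_add (by linarith : (0:ℝ) < 1 - u), Real.rpow_natCast]
      ring
    rw [Ff, Finset.sum_congr rfl hstep, ← Finset.mul_sum, key_identity A B n hAB u]
  refine ⟨t, ht, htm, poly_count A B n t ht fun i => ?_⟩
  have hz : Ff A B n (t i) = 0 := by
    rw [← iter_eq A B n (htm i)]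
    exact htz i
  rw [hfac (t i) (htm i)] at hz
  obtain ⟨h0, h1⟩ := htm i
  have hne1 : (t i)^(A - n) ≠ 0 := (Real.rpow_pos_of_pos h0 _).ne'
  have hne2 : (1 - t i)^(B - n) ≠ 0 := (Real.rpow_pos_of_pos (by linarith) _).ne'
  have hne3 : ((-1:ℝ)^n) ≠ 0 := pow_ne_zero _ (by norm_num)
  have hne4 : dd (A+B) n ≠ 0 := (dd_pos_of _ _ fun i hi => hAB i hi).ne'
  rcases mul_eq_zero.1 hz with h | h
  · rcases mul_eq_zero.1 h with h' | h'
    · exact absurd h' hne1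
    · exact absurd h' hne2
  · rcases mul_eq_zero.1 h with h' | h'
    · rcases mul_eq_zero.1 h' with h'' | h''
      · exact absurd h'' hne3
      · exact absurd h'' hne4
    · exact h'

lemma peven_zeros (α : ℝ) (hα : -1 < α) (q n : ℕ) :
    ∃ t : Fin n → ℝ, StrictMono t ∧ (∀ i, t i ∈ Ioo (0:ℝ) 1) ∧
      ∀ x : ℝ, Peven α q n x = 0 ↔ ∃ i, t i = x^2 := by
  have hA : ∀ i : ℕ, i ≤ n → 0 < ((q:ℝ) + 1/2 + n) - i := by
    intro i hi
    have h1 : (i:ℝ) ≤ (n:ℝ) := Nat.cast_le.2 hi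
    have h2 : (0:ℝ) ≤ (q:ℝ) := Nat.cast_nonneg _
    linarith
  have hB : ∀ i : ℕ, i < n → 0 < (α + (n:ℝ)) - i := by
    intro i hi
    have h1 : (i:ℝ) + 1 ≤ (n:ℝ) := by exact_mod_cast Nat.succ_le_of_lt hi
    linarith
  obtain ⟨t, ht, htm, hiff⟩ := main_zeros ((q:ℝ) + 1/2 + n) (α + (n:ℝ)) n hA hB
  refine ⟨t, ht, htm, fun x => ?_⟩
  have hP : Peven α q n x
      = ∑ k ∈ Finset.range (n+1), pc ((q:ℝ) + 1/2 + n) (α + (n:ℝ)) n k * (x^2)^(n-k) := by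
    rw [Peven]
    refine Finset.sum_congr rfl fun k hk => ?_
    have hk' : k ≤ n := by simpa [Nat.lt_succ_iff] using hk
    have e1 : -(n:ℝ) - q - 1/2 = -((q:ℝ) + 1/2 + n) := by ring
    have e2 : -(2*(n:ℝ)) - α - q - 1/2 = -(((q:ℝ) + 1/2 + n) + (α + (n:ℝ))) := by ring
    have e3 : (x^2)^(n-k) = x^(2*n - 2*k) := by
      rw [← pow_mul]
      congr 1
      omega
    simp only [pc]
    rw [e1, e2, e3]
  rw [hP, hiff (x^2)]

noncomputable def symFun (n : ℕ) (t : Fin n → ℝ) : Fin (2*n) → ℝ := fun j =>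
  if h : (j:ℕ) < n then -Real.sqrt (t ⟨n-1-(j:ℕ), by omega⟩)
  else Real.sqrt (t ⟨(j:ℕ)-n, by have := j.isLt; omega⟩)

lemma symFun_spec (n : ℕ) (t : Fin n → ℝ) (ht : StrictMono t)
    (htm : ∀ i, t i ∈ Ioo (0:ℝ) 1) :
    StrictMono (symFun n t) ∧ (∀ j, -1 < symFun n t j ∧ symFun n t j < 1) ∧
      (∀ v : ℝ, (∃ i, t i = v^2) ↔ ∃ j, symFun n t j = v) := by
  have hpos : ∀ i, 0 < Real.sqrt (t i) := fun i => Real.sqrt_pos.2 (htm i).1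
  have hlt1 : ∀ i, Real.sqrt (t i) < 1 := by
    intro i
    rw [show (1:ℝ) = Real.sqrt 1 by simp]
    exact Real.sqrt_lt_sqrt (htm i).1.le (htm i).2
  have hsq : ∀ i, Real.sqrt (t i) ^ 2 = t i := fun i => Real.sq_sqrt (htm i).1.le
  refine ⟨?_, ?_, ?_⟩
  · -- strict mono
    intro a b hab
    have hab' : (a:ℕ) < (b:ℕ) := hab
    unfold symFun
    rcases Nat.lt_or_ge (a:ℕ) n with ha | ha <;> rcases Nat.lt_or_ge (b:ℕ) n with hb | hb
    · rw [dif_pos ha, dif_pos hb]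
      have : t ⟨n-1-(b:ℕ), by omega⟩ < t ⟨n-1-(a:ℕ), by omega⟩ := by
        refine ht ?_
        simp only [Fin.mk_lt_mk]
        omega
      have := Real.sqrt_lt_sqrt (htm _).1.le this
      linarith
    · rw [dif_pos ha, dif_neg (by omega)]
      have h1 := hpos ⟨n-1-(a:ℕ), by omega⟩
      have h2 := hpos ⟨(b:ℕ)-n, by have := b.isLt; omega⟩
      linarith
    · omega
    · rw [dif_neg (by omega), dif_neg (by omega)]
      refine Real.sqrt_lt_sqrt (htm _).1.le ?_
      refine ht ?_
      simp only [Fin.mk_lt_mk]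
      omega
  · -- bounds
    intro j
    unfold symFun
    split
    · constructor
      · have := hlt1 ⟨n-1-(j:ℕ), by omega⟩
        linarith
      · have := hpos ⟨n-1-(j:ℕ), by omega⟩
        linarith
    · constructor
      · have := hpos ⟨(j:ℕ)-n, by have := j.isLt; omega⟩
        linarith
      · exact hlt1 _
  · -- values
    intro v
    constructor
    · rintro ⟨i, hi⟩
      have hv2 : 0 < v^2 := hi ▸ (htm i).1
      have hvne : v ≠ 0 := by
        intro h
        rw [h] at hv2
        simp at hv2
      have hin : (i:ℕ) < n := i.isLt
      rcases lt_or_gt_of_ne hvne with hv | hv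
      · refine ⟨⟨n-1-(i:ℕ), by omega⟩, ?_⟩
        unfold symFun
        rw [dif_pos (by simp; omega)]
        have hidx : (⟨n-1-(n-1-(i:ℕ)), by omega⟩ : Fin n) = i := by
          ext
          simp
          omega
        rw [hidx, hi, Real.sqrt_sq_eq_abs, abs_of_neg hv]
        ring
      · refine ⟨⟨n + (i:ℕ), by omega⟩, ?_⟩
        unfold symFun
        rw [dif_neg (by simp)]
        have hidx : (⟨n + (i:ℕ) - n, by have h := i.isLt; omega⟩ : Fin n) = i := by
          ext
          simp
        rw [hidx, hi, Real.sqrt_sq_eq_abs, abs_of_pos hv]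
    · rintro ⟨j, hj⟩
      unfold symFun at hj
      by_cases h : (j:ℕ) < n
      · rw [dif_pos h] at hj
        refine ⟨⟨n-1-(j:ℕ), by omega⟩, ?_⟩
        rw [← hj]
        rw [neg_pow, hsq]
        simp
      · rw [dif_neg h] at hj
        refine ⟨⟨(j:ℕ)-n, by have := j.isLt; omega⟩, ?_⟩
        rw [← hj, hsq]

lemma symFun_mid (n : ℕ) (hn : 0 < n) (t : Fin n → ℝ) (j : Fin (2*n)) :
    ((j:ℕ) = n - 1 → symFun n t j = -Real.sqrt (t ⟨0, hn⟩)) ∧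
    ((j:ℕ) = n → symFun n t j = Real.sqrt (t ⟨0, hn⟩)) := by
  constructor
  · intro hj
    unfold symFun
    rw [dif_pos (by omega)]
    have hidx : ∀ (h : n-1-(j:ℕ) < n), (⟨n-1-(j:ℕ), h⟩ : Fin n) = ⟨0, hn⟩ := by
      intro h
      simp only [Fin.mk.injEq]
      omega
    rw [hidx]
  · intro hj
    unfold symFun
    rw [dif_neg (by omega)]
    have hidx : ∀ (h : (j:ℕ)-n < n), (⟨(j:ℕ)-n, h⟩ : Fin n) = ⟨0, hn⟩ := by
      intro h
      simp only [Fin.mk.injEq]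
      omega
    rw [hidx]

/-- `P_{2n}^{α,q}` has `2n` distinct real zeros `x_1 < ⋯ < x_{2n}` and `P_{2n+1}^{α,q}`
has `2n+1` distinct real zeros `y_1 < ⋯ < y_{2n+1}`, but the zeros do not interlace:
it fails that `y_k < x_k < y_{k+1}` for every `k`. -/
theorem zeros_do_not_interlace (α : ℝ) (hα : -1 < α) (q : ℕ) (n : ℕ) (hn : 1 ≤ n) :
    ∃ (x : Fin (2 * n) → ℝ) (y : Fin (2 * n + 1) → ℝ),
      StrictMono x ∧ StrictMono y ∧
      (∀ t : ℝ, Peven α q n t = 0 ↔ ∃ i, x i = t) ∧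
      (∀ t : ℝ, Podd α q n t = 0 ↔ ∃ i, y i = t) ∧
      ¬ (∀ i : Fin (2 * n), y i.castSucc < x i ∧ x i < y i.succ) := by

  obtain ⟨t, ht, htm, htiff⟩ := peven_zeros α hα q n
  obtain ⟨s, hs, hsm, hsiff⟩ := peven_zeros (α+1) (by linarith) q n
  obtain ⟨hxsm, hxsb, hxsv⟩ := symFun_spec n t ht htm
  obtain ⟨hysm, hysb, hysv⟩ := symFun_spec n s hs hsm
  refine ⟨symFun n t, Fin.cons (-1) (symFun n s), hxsm, ?_, ?_, ?_, ?_⟩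
  · -- StrictMono y
    rw [Fin.strictMono_iff_lt_succ]
    intro i
    have hsucc : (Fin.cons (-1:ℝ) (symFun n s) : Fin (2*n+1) → ℝ) i.succ = symFun n s i := by simp
    rw [hsucc]
    rcases Nat.eq_zero_or_pos (i:ℕ) with h0 | h0
    · have hc : i.castSucc = 0 := by
        ext
        simpa using h0
      rw [hc, Fin.cons_zero]
      exact (hysb i).1
    · have hk : (i:ℕ) - 1 < 2*n := by have := i.isLt; omega
      have hc : i.castSucc = Fin.succ ⟨(i:ℕ)-1, hk⟩ := by
        ext
        simp
        omega
      rw [hc, Fin.cons_succ]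
      refine hysm ?_
      show (⟨(i:ℕ)-1, hk⟩ : Fin (2*n)) < i
      rw [Fin.lt_def]
      simp
      omega
  · intro v
    exact (htiff v).trans (hxsv v)
  · intro v
    rw [Podd]
    constructor
    · intro h
      rcases mul_eq_zero.1 h with h | h
      · refine ⟨0, ?_⟩
        rw [Fin.cons_zero]
        linarith
      · obtain ⟨j, hj⟩ := (hysv v).1 ((hsiff v).1 h)
        exact ⟨j.succ, by rw [Fin.cons_succ]; exact hj⟩
    · rintro ⟨j, hj⟩
      induction j using Fin.cases with
      | zero =>
        rw [Fin.cons_zero] at hj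
        rw [← hj]
        norm_num
      | succ i =>
        rw [Fin.cons_succ] at hj
        have : Peven (α+1) q n v = 0 := (hsiff v).2 ((hysv v).2 ⟨i, hj⟩)
        rw [this, mul_zero]
  · intro H
    have hn0 : 0 < n := hn
    have hn2 : n < 2*n := by omega
    have hn1 : n - 1 < 2*n := by omega
    have h1 := (H ⟨n, hn2⟩).2
    have h2 := (H ⟨n-1, hn1⟩).2
    rw [Fin.cons_succ] at h1 h2
    rw [(symFun_mid n hn0 t ⟨n, hn2⟩).2 rfl, (symFun_mid n hn0 s ⟨n, hn2⟩).2 rfl] at h1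
    rw [(symFun_mid n hn0 t ⟨n-1, hn1⟩).1 rfl, (symFun_mid n hn0 s ⟨n-1, hn1⟩).1 rfl] at h2
    linarith
end

section
/- Let α > −1, let q ≥ 0 be an integer, and let n ≥ 1 be an integer. Then for every real x, d/dx P_{2n}^{α,q}(x) = 2n · x · P_{2n−2}^{α+1,q+1}(x). -/
open MeasureTheory intervalIntegral Polynomial

lemma poch_succ_left (a : ℝ) (k : ℕ) : poch a (k+1) = a * poch (a+1) k := by
  unfold poch
  rw [Finset.prod_range_succ', mul_comm]
  congr 1
  · push_cast; ring
  · refine Finset.prod_congr rfl fun i _ => ?_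
    push_cast; ring

lemma poch_key (a : ℝ) (k : ℕ) : poch a k * (a + k) = a * poch (a+1) k := by
  rw [← poch_succ_left]
  exact (Finset.prod_range_succ _ _).symm

/-- Derivative formula: `(P_{2n}^{α,q})'(x) = 2n·x·P_{2n−2}^{α+1,q+1}(x)`. -/
theorem deriv_Peven (α : ℝ) (hα : -1 < α) (q : ℕ) (n : ℕ) (hn : 1 ≤ n) :
    ∀ x : ℝ,
      deriv (Peven α q n) x = 2 * (n : ℝ) * x * Peven (α + 1) (q + 1) (n - 1) x := by
  intro x
  have hP : Peven α q n = fun x : ℝ => ∑ k ∈ Finset.range (n + 1),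
      poch (-(n : ℝ)) k * poch (-(n : ℝ) - q - 1/2) k /
        ((Nat.factorial k : ℝ) * poch (-(2 * (n : ℝ)) - α - q - 1/2) k) * x ^ (2*n - 2*k) := rfl
  rw [hP, deriv_fun_sum (fun k _ => (differentiableAt_pow _).const_mul _)]
  simp only [deriv_const_mul_field, deriv_pow_field]
  rw [Finset.sum_range_succ]
  have hzero : (↑(2 * n - 2 * n) : ℝ) * x ^ (2 * n - 2 * n - 1) = 0 := by
    simp
  rw [hzero, mul_zero, add_zero]
  rw [Peven]
  have hrange : (n - 1) + 1 = n := by omega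
  rw [hrange, Finset.mul_sum]
  refine Finset.sum_congr rfl fun k hk => ?_
  have hk' : k < n := Finset.mem_range.mp hk
  have hcast : ((n - 1 : ℕ) : ℝ) = (n : ℝ) - 1 := by
    push_cast [Nat.cast_sub hn]; ring
  have h1 : (-(((n-1:ℕ)) : ℝ)) = -(n:ℝ) + 1 := by rw [hcast]; ring
  have h2 : (-(n:ℝ) + 1 - ((q+1:ℕ):ℝ) - 1/2) = -(n : ℝ) - q - 1/2 := by
    push_cast; ring
  have h3 : (-(2 * ((n-1:ℕ) : ℝ)) - (α+1) - ((q+1:ℕ):ℝ) - 1/2) = -(2*(n:ℝ)) - α - q - 1/2 := by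
    rw [hcast]; push_cast; ring
  rw [h1, h2, h3]
  have hexp : 2 * n - 2 * k - 1 = 2 * (n - 1) - 2 * k + 1 := by omega
  have hcexp : ((2 * n - 2 * k : ℕ) : ℝ) = 2 * (n : ℝ) - 2 * k := by
    have : (2 * k : ℕ) ≤ 2 * n := by omega
    push_cast [Nat.cast_sub this]; ring
  rw [hexp, hcexp, pow_succ]
  have hkey : poch (-(n:ℝ)) k * (-(n:ℝ) + k) = -(n:ℝ) * poch (-(n:ℝ)+1) k :=
    poch_key _ _
  set A := poch (-(n:ℝ)) k
  set A1 := poch (-(n:ℝ)+1) k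
  set B := poch (-(n : ℝ) - q - 1/2) k
  set D := poch (-(2 * (n:ℝ)) - α - q - 1/2) k
  set K := (Nat.factorial k : ℝ)
  set X := x ^ (2 * (n - 1) - 2 * k)
  linear_combination (-(2 * B * X * x / (K * D))) * hkey
end
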